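/- arXiv:1908.03913 — 2 statements merged into one kernel-verified Lean document; each statement's English description precedes it below -/
import Mathlib

section
/- For the sampled second-order stable spline kernel K(i,j) = (e^{-β(i+j)-β max(i,j)})/2 − e^{-3β max(i,j)}/6 on positive integers, the discrete-time RBF function h(x) = Σ_{j=1}^∞ K(j, j+|x|) equals ((3 e^{-2β|x|} − e^{-3β|x|})/6) · (e^{-3β}/(1 − e^{-3β})) for all x ∈ ℤ. -/
/-- For the sampled second-order stable spline kernel
`K(i,j) = e^{-β(i+j)} e^{-β max(i,j)} / 2 − e^{-3β max(i,j)} / 6` on positive integers,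
the discrete-time RBF function `h(x) = ∑_{j=1}^∞ K(j, j+|x|)` equals
`((3 e^{-2β|x|} − e^{-3β|x|})/6) ⬝ (e^{-3β}/(1 − e^{-3β}))` for all `x ∈ ℤ`. -/
theorem stmt_6 (β : ℝ) (hβ : 0 < β) (x : ℤ) :
    (∑' j : ℕ,
        (Real.exp (-β * (((j : ℝ) + 1) + (((j : ℝ) + 1) + |(x : ℝ)|)))
            * Real.exp (-β * max ((j : ℝ) + 1) (((j : ℝ) + 1) + |(x : ℝ)|)) / 2
          - Real.exp (-3 * β * max ((j : ℝ) + 1) (((j : ℝ) + 1) + |(x : ℝ)|)) / 6))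
      = ((3 * Real.exp (-2 * β * |(x : ℝ)|) - Real.exp (-3 * β * |(x : ℝ)|)) / 6)
          * (Real.exp (-3 * β) / (1 - Real.exp (-3 * β))) := by
  have ha : (0:ℝ) ≤ |(x : ℝ)| := abs_nonneg _
  set a : ℝ := |(x : ℝ)| with hadef
  set r : ℝ := Real.exp (-3 * β) with hrdef
  set C : ℝ := (3 * Real.exp (-2 * β * a) - Real.exp (-3 * β * a)) / 6 with hCdef
  have hr1 : r < 1 := by
    rw [hrdef, Real.exp_lt_one_iff]; nlinarith
  have hr0 : 0 ≤ r := Real.exp_nonneg _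
  have key : ∀ j : ℕ,
      (Real.exp (-β * (((j : ℝ) + 1) + (((j : ℝ) + 1) + a)))
            * Real.exp (-β * max ((j : ℝ) + 1) (((j : ℝ) + 1) + a)) / 2
          - Real.exp (-3 * β * max ((j : ℝ) + 1) (((j : ℝ) + 1) + a)) / 6)
        = C * r ^ (j + 1) := by
    intro j
    have hmax : max ((j : ℝ) + 1) (((j : ℝ) + 1) + a) = ((j : ℝ) + 1) + a :=
      max_eq_right (by linarith)
    rw [hmax]
    have hpow : r ^ (j + 1) = Real.exp (((j : ℕ) + 1 : ℕ) * (-3 * β)) := by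
      rw [Real.exp_nat_mul]
    have e1 : Real.exp (-β * (((j : ℝ) + 1) + (((j : ℝ) + 1) + a)))
        * Real.exp (-β * (((j : ℝ) + 1) + a))
        = Real.exp (-2 * β * a) * Real.exp (((j : ℕ) + 1 : ℕ) * (-3 * β)) := by
      rw [← Real.exp_add, ← Real.exp_add]
      congr 1
      push_cast
      ring
    have e2 : Real.exp (-3 * β * (((j : ℝ) + 1) + a))
        = Real.exp (-3 * β * a) * Real.exp (((j : ℕ) + 1 : ℕ) * (-3 * β)) := by
      rw [← Real.exp_add]
      congr 1
      push_cast
      ring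
    rw [hpow, hCdef, e1, e2]
    ring
  rw [tsum_congr key, tsum_mul_left]
  congr 1
  have : ∀ j : ℕ, r ^ (j + 1) = r * r ^ j := fun j => by rw [pow_succ]; ring
  rw [tsum_congr this, tsum_mul_left, tsum_geometric_of_lt_one hr0 hr1]
  rw [div_eq_mul_inv]
end

section
/- The function h(x) = (3 e^{-2β|x|} − e^{-3β|x|})/(18β) on ℝ (β > 0) is a positive-definite function, i.e. for any points x_1,…,x_n ∈ ℝ and real coefficients c_1,…,c_n, Σ_{i,j} c_i c_j h(x_i − x_j) ≥ 0. -/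
open MeasureTheory Set Real Filter
lemma exp_Ioi (c a : ℝ) (hc : 0 < c) :
    ∫ y in Ioi a, Real.exp (-c * y) = Real.exp (-c * a) / c := by
  have hderiv : ∀ y ∈ Ici a, HasDerivAt (fun y => -(Real.exp (-c * y) / c)) (Real.exp (-c * y)) y := by
    intro y _
    have h1 : HasDerivAt (fun y : ℝ => -c * y) (-c) y := by
      simpa using (hasDerivAt_id y).const_mul (-c)
    have h2 := (h1.exp).div_const c |>.neg
    refine h2.congr_deriv ?_
    field_simp
  have hint : IntegrableOn (fun y => Real.exp (-c * y)) (Ioi a) := exp_neg_integrableOn_Ioi a hc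
  have htend : Tendsto (fun y => -(Real.exp (-c * y) / c)) atTop (nhds 0) := by
    have h3 : Tendsto (fun y : ℝ => -c * y) atTop atBot := by
      apply Filter.Tendsto.const_mul_atTop_of_neg (by linarith) tendsto_id
    have := (Real.tendsto_exp_atBot.comp h3).div_const c |>.neg
    simpa using this
  have := integral_Ioi_of_hasDerivAt_of_tendsto' (f := fun y => -(Real.exp (-c * y) / c))
    (fun y hy => hderiv y hy) hint htend
  rw [this]; ring
noncomputable def phi (β a : ℝ) (p : ℝ × ℝ) : ℝ :=
  if a ≤ p.1 ∧ 0 ≤ p.2 then max (Real.exp (-β * (p.1 - a)) - p.2) 0 else 0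
lemma poly_int (u v : ℝ) (hv : 0 ≤ v) :
    ∫ τ, (Set.Icc (0:ℝ) v).indicator (fun τ => (u - τ) * (v - τ)) τ
      = u * v ^ 2 / 2 - v ^ 3 / 6 := by
  rw [MeasureTheory.integral_indicator measurableSet_Icc,
    MeasureTheory.integral_Icc_eq_integral_Ioc,
    ← intervalIntegral.integral_of_le hv]
  have hd : ∀ τ ∈ Set.uIcc (0:ℝ) v,
      HasDerivAt (fun t => u * v * t - (u + v) * t ^ 2 / 2 + t ^ 3 / 3)
        ((u - τ) * (v - τ)) τ := by
    intro τ _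
    have h1 : HasDerivAt (fun t : ℝ => u * v * t) (u * v) τ := by
      simpa using (hasDerivAt_id τ).const_mul (u * v)
    have h2 : HasDerivAt (fun t : ℝ => (u + v) * t ^ 2 / 2) ((u + v) * (2 * τ) / 2) τ :=
      ((hasDerivAt_pow 2 τ).const_mul (u + v)).div_const 2 |>.congr_deriv (by ring)
    have h3 : HasDerivAt (fun t : ℝ => t ^ 3 / 3) (3 * τ ^ 2 / 3) τ :=
      (hasDerivAt_pow 3 τ).div_const 3 |>.congr_deriv (by ring)
    have := (h1.sub h2).add h3
    exact this.congr_deriv (by ring)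
  rw [intervalIntegral.integral_eq_sub_of_hasDerivAt hd (by apply Continuous.intervalIntegrable; fun_prop)]
  ring
lemma inner_eq (β a b y : ℝ) (hβ : 0 < β) (hba : b ≤ a) :
    (∫ τ, phi β a (y, τ) * phi β b (y, τ))
      = (Set.Ici a).indicator
          (fun y => Real.exp (β * (a + 2 * b)) * Real.exp (-3 * β * y) / 2
            - Real.exp (3 * β * b) * Real.exp (-3 * β * y) / 6) y := by
  by_cases hy : a ≤ y
  · rw [Set.indicator_of_mem (Set.mem_Ici.2 hy)]
    set u := Real.exp (-β * (y - a)) with hu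
    set v := Real.exp (-β * (y - b)) with hvdef
    have hv : 0 < v := Real.exp_pos _
    have hvu : v ≤ u := Real.exp_le_exp.2 (by nlinarith)
    have hby : b ≤ y := le_trans hba hy
    have hfun : (fun τ => phi β a (y, τ) * phi β b (y, τ))
        = (Set.Icc (0:ℝ) v).indicator (fun τ => (u - τ) * (v - τ)) := by
      funext τ
      by_cases hτ : 0 ≤ τ
      · by_cases hτv : τ ≤ v
        · rw [Set.indicator_of_mem (Set.mem_Icc.2 ⟨hτ, hτv⟩)]
          have e1 : phi β a (y, τ) = u - τ := by
            unfold phi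
            rw [if_pos ⟨hy, hτ⟩]
            exact max_eq_left (by rw [← hu]; linarith [le_trans hτv hvu])
          have e2 : phi β b (y, τ) = v - τ := by
            unfold phi
            rw [if_pos ⟨hby, hτ⟩]
            exact max_eq_left (by rw [← hvdef]; linarith)
          rw [e1, e2]
        · rw [Set.indicator_of_notMem (by simp [Set.mem_Icc]; intro h; linarith)]
          have e2 : phi β b (y, τ) = 0 := by
            unfold phi
            rw [if_pos ⟨hby, hτ⟩]
            exact max_eq_right (by rw [← hvdef]; linarith)
          rw [e2, mul_zero]
      · rw [Set.indicator_of_notMem (by simp [Set.mem_Icc]; intro h; exact absurd h hτ)]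
        have e2 : phi β b (y, τ) = 0 := by
          unfold phi
          rw [if_neg (by tauto)]
        rw [e2, mul_zero]
    rw [hfun, poly_int u v hv.le]
    have h1 : u * v ^ 2 = Real.exp (β * (a + 2 * b)) * Real.exp (-3 * β * y) := by
      rw [hu, hvdef, ← Real.exp_add, sq, ← Real.exp_add, ← Real.exp_add]
      congr 1; ring
    have h2 : v ^ 3 = Real.exp (3 * β * b) * Real.exp (-3 * β * y) := by
      rw [hvdef, pow_succ, sq, ← Real.exp_add, ← Real.exp_add, ← Real.exp_add]
      congr 1; ring
    rw [h1, h2]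
  · rw [Set.indicator_of_notMem (by simpa using hy)]
    have : (fun τ => phi β a (y, τ) * phi β b (y, τ)) = fun _ => (0:ℝ) := by
      funext τ; unfold phi; rw [if_neg (by tauto)]; ring
    rw [this, integral_zero]
lemma phi_nonneg (β a : ℝ) (p : ℝ × ℝ) : 0 ≤ phi β a p := by
  unfold phi; split <;> simp
lemma phi_meas (β a : ℝ) : Measurable (phi β a) := by
  unfold phi
  apply Measurable.ite
  · exact (measurableSet_le measurable_const measurable_fst).inter
      (measurableSet_le measurable_const measurable_snd)
  · fun_prop
  · fun_prop
lemma phi_le_fst (β a : ℝ) (p : ℝ × ℝ) :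
    phi β a p ≤ (Set.Ici a).indicator (fun y => Real.exp (-β * (y - a))) p.1 := by
  unfold phi
  split
  · next h =>
    rw [Set.indicator_of_mem (Set.mem_Ici.2 h.1)]
    exact max_le (by linarith [h.2]) (Real.exp_pos _).le
  · exact Set.indicator_nonneg (fun y _ => (Real.exp_pos _).le) _
lemma phi_le_snd (β b : ℝ) (hβ : 0 < β) (p : ℝ × ℝ) :
    phi β b p ≤ (Set.Icc (0:ℝ) 1).indicator (fun _ => (1:ℝ)) p.2 := by
  unfold phi
  split
  · next h =>
    have he : Real.exp (-β * (p.1 - b)) ≤ 1 :=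
      Real.exp_le_one_iff.2 (by nlinarith [h.1])
    by_cases h1 : p.2 ≤ 1
    · rw [Set.indicator_of_mem (Set.mem_Icc.2 ⟨h.2, h1⟩)]
      exact max_le (by linarith [h.2]) zero_le_one
    · rw [Set.indicator_of_notMem (by simp [Set.mem_Icc]; intro _; linarith)]
      exact le_of_eq (max_eq_right (by nlinarith [h.2]))
  · exact Set.indicator_nonneg (fun y _ => zero_le_one) _
lemma phi_mul_integrable (β : ℝ) (hβ : 0 < β) (a b : ℝ) :
    Integrable (fun p : ℝ × ℝ => phi β a p * phi β b p) := by
  have hG : Integrable (fun p : ℝ × ℝ =>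
      (Set.Ici a).indicator (fun y => Real.exp (-β * (y - a))) p.1 *
        (Set.Icc (0:ℝ) 1).indicator (fun _ => (1:ℝ)) p.2) := by
    rw [MeasureTheory.Measure.volume_eq_prod]
    apply Integrable.mul_prod
    · rw [integrable_indicator_iff measurableSet_Ici]
      rw [integrableOn_Ici_iff_integrableOn_Ioi]
      have : (fun y : ℝ => Real.exp (-β * (y - a)))
          = fun y => Real.exp (β * a) * Real.exp (-β * y) := by
        funext y; rw [← Real.exp_add]; congr 1; ring
      rw [this]
      exact (exp_neg_integrableOn_Ioi a hβ).const_mul _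
    · rw [integrable_indicator_iff measurableSet_Icc]
      exact integrableOn_const (by simp)
  refine hG.mono' ((phi_meas β a).mul (phi_meas β b)).aestronglyMeasurable ?_
  filter_upwards with p
  rw [Real.norm_eq_abs, abs_of_nonneg (mul_nonneg (phi_nonneg _ _ _) (phi_nonneg _ _ _))]
  exact mul_le_mul (phi_le_fst β a p) (phi_le_snd β b hβ p) (phi_nonneg _ _ _)
    (Set.indicator_nonneg (fun y _ => (Real.exp_pos _).le) _)

lemma key_le (β : ℝ) (hβ : 0 < β) (a b : ℝ) (hba : b ≤ a) :
    ∫ p : ℝ × ℝ, phi β a p * phi β b p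
      = (3 * Real.exp (-2 * β * (a - b)) - Real.exp (-3 * β * (a - b))) / (18 * β) := by
  have hint : Integrable (fun p : ℝ × ℝ => phi β a p * phi β b p)
      ((volume : Measure ℝ).prod (volume : Measure ℝ)) := by
    rw [← MeasureTheory.Measure.volume_eq_prod]; exact phi_mul_integrable β hβ a b
  have hfub := MeasureTheory.integral_prod (fun p : ℝ × ℝ => phi β a p * phi β b p) hint
  rw [← MeasureTheory.Measure.volume_eq_prod] at hfub
  rw [hfub]
  calc ∫ y : ℝ, ∫ τ : ℝ, phi β a (y, τ) * phi β b (y, τ)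
      = ∫ y : ℝ, (Set.Ici a).indicator
          (fun y => (Real.exp (β * (a + 2 * b)) / 2 - Real.exp (3 * β * b) / 6)
            * Real.exp (-(3 * β) * y)) y := by
        congr 1; funext y
        rw [inner_eq β a b y hβ hba]
        congr 1; funext y; ring_nf
    _ = (Real.exp (β * (a + 2 * b)) / 2 - Real.exp (3 * β * b) / 6)
          * (Real.exp (-(3 * β) * a) / (3 * β)) := by
        rw [MeasureTheory.integral_indicator measurableSet_Ici,
          MeasureTheory.integral_Ici_eq_integral_Ioi,
          MeasureTheory.integral_const_mul, exp_Ioi (3 * β) a (by linarith)]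
    _ = (3 * Real.exp (-2 * β * (a - b)) - Real.exp (-3 * β * (a - b))) / (18 * β) := by
        have h1 : Real.exp (β * (a + 2 * b)) * Real.exp (-(3 * β) * a)
            = Real.exp (-2 * β * (a - b)) := by rw [← Real.exp_add]; congr 1; ring
        have h2 : Real.exp (3 * β * b) * Real.exp (-(3 * β) * a)
            = Real.exp (-3 * β * (a - b)) := by rw [← Real.exp_add]; congr 1; ring
        rw [← h1, ← h2]
        field_simp
        ring

lemma key (β : ℝ) (hβ : 0 < β) (a b : ℝ) :
    ∫ p : ℝ × ℝ, phi β a p * phi β b p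
      = (3 * Real.exp (-2 * β * |a - b|) - Real.exp (-3 * β * |a - b|)) / (18 * β) := by
  rcases le_total b a with h | h
  · rw [abs_of_nonneg (by linarith)]; exact key_le β hβ a b h
  · rw [abs_of_nonpos (by linarith), show -(a - b) = b - a by ring]
    rw [show (fun p : ℝ × ℝ => phi β a p * phi β b p)
      = fun p => phi β b p * phi β a p from funext fun p => mul_comm _ _]
    exact key_le β hβ b a h

open Finset

/-- The second-order stable spline RBF kernel `h(x) = (3e^{-2β|x|} − e^{-3β|x|})/(18β)`
(β > 0) is a positive-definite function on `ℝ`. -/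
theorem stmt_10 (β : ℝ) (hβ : 0 < β) (n : ℕ) (x : Fin n → ℝ) (c : Fin n → ℝ) :
    0 ≤ ∑ i : Fin n, ∑ j : Fin n,
      c i * c j *
        ((3 * Real.exp (-2 * β * |x i - x j|) - Real.exp (-3 * β * |x i - x j|))
          / (18 * β)) := by
  have hInt : ∀ i j : Fin n,
      Integrable (fun p : ℝ × ℝ => c i * c j * (phi β (x i) p * phi β (x j) p)) :=
    fun i j => (phi_mul_integrable β hβ _ _).const_mul _
  have hkey : ∀ i j : Fin n,
      (∫ p : ℝ × ℝ, c i * c j * (phi β (x i) p * phi β (x j) p))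
        = c i * c j *
          ((3 * Real.exp (-2 * β * |x i - x j|) - Real.exp (-3 * β * |x i - x j|))
            / (18 * β)) := by
    intro i j
    rw [MeasureTheory.integral_const_mul, key β hβ]
  calc (0:ℝ) ≤ ∫ p : ℝ × ℝ, (∑ i : Fin n, c i * phi β (x i) p) ^ 2 :=
        MeasureTheory.integral_nonneg fun p => sq_nonneg _
    _ = ∫ p : ℝ × ℝ, ∑ i : Fin n, ∑ j : Fin n,
          c i * c j * (phi β (x i) p * phi β (x j) p) := by
        congr 1; funext p
        rw [sq, Finset.sum_mul_sum]
        exact Finset.sum_congr rfl fun i _ => Finset.sum_congr rfl fun j _ => by ring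
    _ = ∑ i : Fin n, ∑ j : Fin n,
          ∫ p : ℝ × ℝ, c i * c j * (phi β (x i) p * phi β (x j) p) := by
        rw [MeasureTheory.integral_finset_sum _
          (fun i _ => integrable_finset_sum _ fun j _ => hInt i j)]
        exact Finset.sum_congr rfl fun i _ =>
          MeasureTheory.integral_finset_sum _ fun j _ => hInt i j
    _ = ∑ i : Fin n, ∑ j : Fin n,
          c i * c j *
            ((3 * Real.exp (-2 * β * |x i - x j|) - Real.exp (-3 * β * |x i - x j|))
              / (18 * β)) :=
        Finset.sum_congr rfl fun i _ => Finset.sum_congr rfl fun j _ => hkey i j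
end
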